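/- Let I be an equigenerated symmetric monomial ideal of K[x_1,...,x_n]. The rank of the matrix whose rows are the exponent vectors of the minimal monomial generators of I equals 1 if I is principal generated by (x_1⋯x_n)^a for some a, and equals n otherwise. -/

import Mathlib

open MvPolynomial

/-- The monomial `x^a` in `K[x_1,...,x_n]`. -/
noncomputable def mon (K : Type) [Field K] (n : ℕ) (a : Fin n → ℕ) :
    MvPolynomial (Fin n) K :=
  monomial (Finsupp.equivFunOnFinite.symm a) 1

/-- A monomial ideal: an ideal generated by monomials. -/
def IsMonomialIdeal (K : Type) [Field K] (n : ℕ)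
    (I : Ideal (MvPolynomial (Fin n) K)) : Prop :=
  ∃ S : Set (Fin n → ℕ), I = Ideal.span (mon K n '' S)

/-- A symmetric (`𝔖_n`-fixed) ideal. -/
def IsSymmetricIdeal (K : Type) [Field K] (n : ℕ)
    (I : Ideal (MvPolynomial (Fin n) K)) : Prop :=
  ∀ σ : Equiv.Perm (Fin n), Ideal.map (rename (σ : Fin n → Fin n)) I = I

/-- The exponent vector obtained from `a` by the Borel move `x^a ↦ x^a · x_i / x_j`. -/
def borelMoveVec (n : ℕ) (a : Fin n → ℕ) (i j : Fin n) : Fin n → ℕ :=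
  fun k => if k = i then a k + 1 else if k = j then a k - 1 else a k

/-- A symmetric strongly shifted ideal (sssi). -/
def IsSSSI (K : Type) [Field K] (n : ℕ)
    (I : Ideal (MvPolynomial (Fin n) K)) : Prop :=
  IsMonomialIdeal K n I ∧ IsSymmetricIdeal K n I ∧
    ∀ lam : Fin n → ℕ, Monotone lam → mon K n lam ∈ I →
      ∀ i j : Fin n, i < j → lam i < lam j →
        mon K n (borelMoveVec n lam i j) ∈ I

/-- The dominance order on partitions: `μ ⊴ λ`. -/
def dominates (n : ℕ) (μ lam : Fin n → ℕ) : Prop :=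
  ∀ k : Fin n, ∑ i ∈ Finset.Ici k, μ i ≤ ∑ i ∈ Finset.Ici k, lam i

/-- `a` is the exponent vector of a minimal monomial generator of the
monomial ideal `I`. -/
def IsMinGen (K : Type) [Field K] (n : ℕ) (I : Ideal (MvPolynomial (Fin n) K))
    (a : Fin n → ℕ) : Prop :=
  mon K n a ∈ I ∧ ∀ b : Fin n → ℕ, (∀ i, b i ≤ a i) → b ≠ a → mon K n b ∉ I

section Aux

variable (K : Type) [Field K] (n : ℕ)

lemma mon_dvd {s b : Fin n → ℕ} (h : ∀ i, s i ≤ b i) : mon K n s ∣ mon K n b := by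
  refine ⟨mon K n (fun i => b i - s i), ?_⟩
  rw [mon, mon, mon, monomial_mul, mul_one]
  have : Finsupp.equivFunOnFinite.symm b =
      Finsupp.equivFunOnFinite.symm s + Finsupp.equivFunOnFinite.symm (fun i => b i - s i) := by
    ext i
    rw [Finsupp.add_apply]
    show b i = s i + (b i - s i)
    have := h i
    omega
  rw [this]

lemma mem_span_mon {S : Set (Fin n → ℕ)} {b : Fin n → ℕ} :
    mon K n b ∈ Ideal.span (mon K n '' S) ↔ ∃ s ∈ S, ∀ i, s i ≤ b i := by
  constructor
  · intro h
    rw [Ideal.span, Submodule.mem_span_set] at h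
    obtain ⟨c, hsupp, hc⟩ := h
    have h1 : MvPolynomial.coeff (Finsupp.equivFunOnFinite.symm b) (mon K n b) = 1 := by
      simp [mon, coeff_monomial]
    rw [← hc] at h1
    rw [Finsupp.sum, coeff_sum] at h1
    have := Finset.exists_ne_zero_of_sum_ne_zero (h1 ▸ one_ne_zero)
    obtain ⟨p, hp, hne⟩ := this
    obtain ⟨s, hs, rfl⟩ := hsupp hp
    refine ⟨s, hs, ?_⟩
    rw [smul_eq_mul, mon, coeff_mul_monomial'] at hne
    by_cases hle : Finsupp.equivFunOnFinite.symm s ≤ Finsupp.equivFunOnFinite.symm b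
    · intro i; exact hle i
    · simp [hle] at hne
  · rintro ⟨s, hs, hle⟩
    obtain ⟨q, hq⟩ := mon_dvd K n hle
    rw [hq]
    exact Ideal.mul_mem_right _ _ (Ideal.subset_span ⟨s, hs, rfl⟩)

lemma rename_mon (σ : Equiv.Perm (Fin n)) (a : Fin n → ℕ) :
    rename (σ : Fin n → Fin n) (mon K n a) = mon K n (a ∘ σ.symm) := by
  rw [mon, rename_monomial, mon]
  have : Finsupp.mapDomain (σ : Fin n → Fin n) (Finsupp.equivFunOnFinite.symm a) =
      Finsupp.equivFunOnFinite.symm (a ∘ σ.symm) := by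
    ext j
    rw [show (j : Fin n) = σ (σ.symm j) by simp, Finsupp.mapDomain_apply σ.injective]
    simp [Finsupp.equivFunOnFinite]
    rfl
  rw [this]

lemma mem_perm {I : Ideal (MvPolynomial (Fin n) K)} (hsym : IsSymmetricIdeal K n I)
    {a : Fin n → ℕ} (σ : Equiv.Perm (Fin n)) (h : mon K n a ∈ I) :
    mon K n (a ∘ σ) ∈ I := by
  have h2 := hsym σ.symm
  have h3 : rename (σ.symm : Fin n → Fin n) (mon K n a) ∈
      Ideal.map (rename (σ.symm : Fin n → Fin n)) I :=
    Ideal.mem_map_of_mem _ h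
  rw [h2, rename_mon] at h3
  simpa using h3

lemma minGen_perm {I : Ideal (MvPolynomial (Fin n) K)} (hsym : IsSymmetricIdeal K n I)
    {a : Fin n → ℕ} (σ : Equiv.Perm (Fin n)) (h : IsMinGen K n I a) :
    IsMinGen K n I (a ∘ σ) := by
  refine ⟨mem_perm K n hsym σ h.1, ?_⟩
  intro b hle hne hmem
  refine h.2 (b ∘ σ.symm) (fun i => by simpa using hle (σ.symm i)) ?_
    (mem_perm K n hsym σ.symm hmem)
  intro hb
  apply hne
  funext i
  have := congrFun hb (σ i)
  simpa using this

lemma exists_minGen_le (I : Ideal (MvPolynomial (Fin n) K)) :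
    ∀ N (a : Fin n → ℕ), ∑ i, a i ≤ N → mon K n a ∈ I →
      ∃ m, IsMinGen K n I m ∧ ∀ i, m i ≤ a i := by
  intro N
  induction N with
  | zero =>
    intro a hsum hmem
    refine ⟨a, ⟨hmem, ?_⟩, fun i => le_refl _⟩
    intro b hle hne hbm
    apply hne
    funext i
    have h1 : a i = 0 := by
      have := Finset.single_le_sum (f := a) (fun i _ => Nat.zero_le _) (Finset.mem_univ i)
      omega
    have := hle i
    omega
  | succ N ih =>
    intro a hsum hmem
    by_cases hmin : IsMinGen K n I a
    · exact ⟨a, hmin, fun i => le_refl _⟩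
    · rw [IsMinGen, not_and] at hmin
      push_neg at hmin
      obtain ⟨b, hle, hne, hbm⟩ := hmin hmem
      have hlt : ∑ i, b i < ∑ i, a i := by
        have hex : ∃ i, b i < a i := by
          by_contra hc
          push_neg at hc
          exact hne (funext fun i => le_antisymm (hle i) (hc i))
        obtain ⟨i, hi⟩ := hex
        exact Finset.sum_lt_sum (fun j _ => hle j) ⟨i, Finset.mem_univ i, hi⟩
      obtain ⟨m, hm, hmle⟩ := ih b (by omega) hbm
      exact ⟨m, hm, fun i => le_trans (hmle i) (hle i)⟩

lemma span_minGens (I : Ideal (MvPolynomial (Fin n) K)) (hmono : IsMonomialIdeal K n I) :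
    I = Ideal.span (mon K n '' {a | IsMinGen K n I a}) := by
  obtain ⟨S, hS⟩ := hmono
  have h1 : Ideal.span (mon K n '' S) ≤ Ideal.span (mon K n '' {a | IsMinGen K n I a}) := by
    rw [Ideal.span_le]
    rintro _ ⟨s, hs, rfl⟩
    have hmem : mon K n s ∈ I := hS ▸ Ideal.subset_span ⟨s, hs, rfl⟩
    obtain ⟨m, hm, hle⟩ := exists_minGen_le K n I (∑ i, s i) s (le_refl _) hmem
    obtain ⟨q, hq⟩ := mon_dvd K n hle
    rw [hq]
    exact Ideal.mul_mem_right _ _ (Ideal.subset_span ⟨m, hm, rfl⟩)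
  refine le_antisymm (hS.le.trans h1) ?_
  rw [Ideal.span_le]
  rintro _ ⟨m, hm, rfl⟩
  exact hm.1

end Aux

/-- For a nonzero proper equigenerated symmetric monomial ideal `I`, the rank
over `ℚ` of the matrix whose rows are the exponent vectors of the minimal
monomial generators of `I` is `1` when `I` is principal generated by
`(x_1⋯x_n)^a` for some `a`, and `n` otherwise. -/
theorem rank_exponent_matrix (K : Type) [Field K] (n : ℕ)
    (I : Ideal (MvPolynomial (Fin n) K))
    (hmono : IsMonomialIdeal K n I) (hsym : IsSymmetricIdeal K n I)
    (hequi : ∃ d : ℕ, ∀ a : Fin n → ℕ, IsMinGen K n I a → ∑ i, a i = d)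
    (hbot : I ≠ ⊥) (htop : I ≠ ⊤) :
    ((∃ a : ℕ, I = Ideal.span {mon K n (fun _ => a)}) →
      Module.finrank ℚ
        (Submodule.span ℚ {v : Fin n → ℚ |
          ∃ a : Fin n → ℕ, IsMinGen K n I a ∧ v = fun i => (a i : ℚ)}) = 1) ∧
    ((¬ ∃ a : ℕ, I = Ideal.span {mon K n (fun _ => a)}) →
      Module.finrank ℚ
        (Submodule.span ℚ {v : Fin n → ℚ |
          ∃ a : Fin n → ℕ, IsMinGen K n I a ∧ v = fun i => (a i : ℚ)}) = n) := by
  -- n is positive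
  have hn : 0 < n := by
    rcases Nat.eq_zero_or_pos n with h0 | h
    · exfalso
      subst h0
      obtain ⟨S, hS⟩ := hmono
      rcases S.eq_empty_or_nonempty with rfl | ⟨s, hs⟩
      · exact hbot (by simpa using hS)
      · apply htop
        rw [hS, Ideal.eq_top_iff_one]
        have h1 : mon K 0 s = 1 := by
          rw [mon]
          have h2 : (Finsupp.equivFunOnFinite.symm s : Fin 0 →₀ ℕ) = 0 := by
            ext i; exact i.elim0
          rw [h2, monomial_zero', C_1]
        exact h1 ▸ Ideal.subset_span ⟨s, hs, rfl⟩
    · exact h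
  constructor
  · -- principal case
    rintro ⟨a, hI⟩
    have ha0 : a ≠ 0 := by
      rintro rfl
      apply htop
      rw [hI]
      have h1 : mon K n (fun _ => (0:ℕ)) = 1 := by
        rw [mon]
        have h2 : (Finsupp.equivFunOnFinite.symm (fun _ => (0:ℕ)) : Fin n →₀ ℕ) = 0 := by
          ext i; rfl
        rw [h2, monomial_zero', C_1]
      rw [h1, Ideal.span_singleton_one]
    have hchar : ∀ b : Fin n → ℕ, mon K n b ∈ I ↔ ∀ i, a ≤ b i := by
      intro b
      rw [hI, show ({mon K n (fun _ => a)} : Set (MvPolynomial (Fin n) K)) =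
        mon K n '' {fun _ => a} from (Set.image_singleton).symm, mem_span_mon]
      simp
    have hmg : ∀ b : Fin n → ℕ, IsMinGen K n I b ↔ b = fun _ => a := by
      intro b
      constructor
      · intro hb
        have h1 := (hchar b).1 hb.1
        by_contra hne
        exact hb.2 (fun _ => a) h1 (fun h => hne h.symm)
          ((hchar _).2 (fun i => le_refl a))
      · rintro rfl
        refine ⟨(hchar _).2 (fun i => le_refl a), ?_⟩
        intro b hle hne hbm
        have := (hchar b).1 hbm
        exact hne (funext fun i => le_antisymm (hle i) (this i))
    have hset : {v : Fin n → ℚ | ∃ c : Fin n → ℕ, IsMinGen K n I c ∧ v = fun i => (c i : ℚ)}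
        = {fun _ => (a:ℚ)} := by
      ext v
      simp only [Set.mem_setOf_eq, Set.mem_singleton_iff]
      constructor
      · rintro ⟨c, hc, rfl⟩
        rw [hmg] at hc
        subst hc
        rfl
      · rintro rfl
        exact ⟨fun _ => a, (hmg _).2 rfl, rfl⟩
    rw [hset]
    have hv : (fun _ => (a:ℚ) : Fin n → ℚ) ≠ 0 := by
      intro h
      have := congrFun h ⟨0, hn⟩
      simp only [Pi.zero_apply, Nat.cast_eq_zero] at this
      exact ha0 this
    exact finrank_span_singleton hv
  · -- non-principal case
    intro hnp
    obtain ⟨d, hd⟩ := hequi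
    -- find a minimal generator
    obtain ⟨S, hS⟩ := hmono
    have hSne : S.Nonempty := by
      rcases S.eq_empty_or_nonempty with rfl | h
      · exact absurd (by simpa using hS) hbot
      · exact h
    obtain ⟨s, hs⟩ := hSne
    have hsmem : mon K n s ∈ I := by
      rw [hS]; exact Ideal.subset_span ⟨s, hs, rfl⟩
    obtain ⟨m, hm, -⟩ := exists_minGen_le K n I (∑ i, s i) s (le_refl _) hsmem
    -- there is a non-constant minimal generator
    by_cases hcon : ∃ c : Fin n → ℕ, IsMinGen K n I c ∧ ∃ i j, c i ≠ c j
    · -- non-constant min gen c with c i ≠ c j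
      obtain ⟨c, hc, i, j, hij⟩ := hcon
      have hi_ne_j : i ≠ j := fun h => hij (by rw [h])
      set V := Submodule.span ℚ {v : Fin n → ℚ |
        ∃ a : Fin n → ℕ, IsMinGen K n I a ∧ v = fun i => (a i : ℚ)} with hV
      have horb : ∀ σ : Equiv.Perm (Fin n), (fun k => ((c (σ k)) : ℚ)) ∈ V :=
        fun σ => Submodule.subset_span ⟨c ∘ σ, minGen_perm K n hsym σ hc, rfl⟩
      have hcsum : (∑ k, (c k : ℚ)) = d := by
        rw [← Nat.cast_sum]
        exact_mod_cast hd c hc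
      have hd0 : (d : ℚ) ≠ 0 := by
        intro h
        have hdz : d = 0 := by exact_mod_cast h
        have := hd c hc
        rw [hdz, Finset.sum_eq_zero_iff] at this
        exact hij (by rw [this i (Finset.mem_univ i), this j (Finset.mem_univ j)])
      have hdiff : ∀ k l : Fin n, k ≠ l →
          (Pi.single k (1:ℚ) - Pi.single l 1) ∈ V := by
        intro k l hkl
        set τ₁ := Equiv.swap k i with hτ₁
        have h1 : τ₁ k = i := Equiv.swap_apply_left k i
        have hl'i : τ₁ l ≠ i := by
          intro h
          exact hkl (τ₁.injective (h.trans h1.symm)).symm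
        set τ₂ := Equiv.swap (τ₁ l) j with hτ₂
        set τ := τ₁.trans τ₂ with hτ
        have hτk : τ k = i := by
          rw [hτ, Equiv.trans_apply, h1]
          exact Equiv.swap_apply_of_ne_of_ne (Ne.symm hl'i) hi_ne_j
        have hτl : τ l = j := by
          rw [hτ, Equiv.trans_apply]
          exact Equiv.swap_apply_left _ _
        have hv1 := horb τ
        have hv2 := horb ((Equiv.swap k l).trans τ)
        have key : (fun p => ((c (τ p)):ℚ)) - (fun p => ((c (((Equiv.swap k l).trans τ) p)):ℚ))
            = ((c i : ℚ) - c j) • (Pi.single k (1:ℚ) - Pi.single l 1) := by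
          funext p
          simp only [Pi.sub_apply, Pi.smul_apply, smul_eq_mul, Equiv.trans_apply]
          by_cases hpk : p = k
          · subst hpk
            rw [Equiv.swap_apply_left, hτk, hτl]
            simp [Pi.single_apply, hkl]
          · by_cases hpl : p = l
            · subst hpl
              rw [Equiv.swap_apply_right, hτk, hτl]
              simp [Pi.single_apply, Ne.symm hkl]
            · rw [Equiv.swap_apply_of_ne_of_ne hpk hpl]
              simp [Pi.single_apply, hpk, hpl]
        have hmem : ((c i:ℚ) - c j) • (Pi.single k (1:ℚ) - Pi.single l 1) ∈ V :=
          key ▸ Submodule.sub_mem V hv1 hv2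
        have hne : ((c i:ℚ) - c j) ≠ 0 := by
          rw [sub_ne_zero]
          exact_mod_cast hij
        have h2 := Submodule.smul_mem V ((c i:ℚ) - c j)⁻¹ hmem
        rwa [smul_smul, inv_mul_cancel₀ hne, one_smul] at h2
      have hsingle : ∀ k : Fin n, Pi.single k (1:ℚ) ∈ V := by
        intro k
        have hterm : ∀ p : Fin n, ((c p:ℚ)) • ((Pi.single p (1:ℚ) : Fin n → ℚ) - Pi.single k 1) ∈ V := by
          intro p
          by_cases h : p = k
          · subst h
            simp only [sub_self, smul_zero]
            exact Submodule.zero_mem V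
          · exact Submodule.smul_mem V _ (hdiff p k h)
        have hvc : (fun p => ((c p):ℚ)) ∈ V := by
          have := horb (Equiv.refl (Fin n))
          simpa using this
        have key : (fun p => ((c p):ℚ)) - ∑ p, ((c p:ℚ)) • ((Pi.single p (1:ℚ) : Fin n → ℚ) - Pi.single k 1)
            = (d:ℚ) • (Pi.single k (1:ℚ) : Fin n → ℚ) := by
          funext q
          simp only [Pi.sub_apply, Finset.sum_apply, Pi.smul_apply, smul_eq_mul,
            Pi.single_apply, mul_sub, Finset.sum_sub_distrib, mul_ite, mul_one, mul_zero]
          rw [Finset.sum_ite_eq Finset.univ q (fun p => (c p : ℚ))]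
          by_cases hqk : q = k
          · subst hqk
            simp [hcsum]
          · simp [hqk]
        have hsub : ((d:ℚ)) • (Pi.single k (1:ℚ) : Fin n → ℚ) ∈ V :=
          key ▸ Submodule.sub_mem V hvc (Submodule.sum_mem V (fun p _ => hterm p))
        have h2 := Submodule.smul_mem V ((d:ℚ))⁻¹ hsub
        rwa [smul_smul, inv_mul_cancel₀ hd0, one_smul] at h2
      have htopV : V = ⊤ := by
        rw [eq_top_iff]
        intro v _
        have hv : v = ∑ k, v k • (Pi.single k (1:ℚ) : Fin n → ℚ) := by
          funext q
          simp [Finset.sum_apply, Pi.single_apply, Finset.sum_ite_eq']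
        rw [hv]
        exact Submodule.sum_mem V (fun k _ => Submodule.smul_mem V _ (hsingle k))
      rw [htopV, finrank_top]
      simp
    · -- all minimal generators are constant: contradiction with non-principality
      exfalso
      apply hnp
      push_neg at hcon
      have hmc : ∀ b : Fin n → ℕ, IsMinGen K n I b → b = m := by
        intro b hb
        funext p
        have h1 := hcon b hb
        have h2 := hcon m hm
        have hb' : ∑ q, b q = n * b p := by
          rw [Finset.sum_congr rfl (fun q _ => h1 q p)]
          simp [Finset.sum_const, mul_comm]
        have hm' : ∑ q, m q = n * m p := by
          rw [Finset.sum_congr rfl (fun q _ => h2 q p)]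
          simp [Finset.sum_const, mul_comm]
        have := hd b hb
        have := hd m hm
        have : n * b p = n * m p := by omega
        exact Nat.eq_of_mul_eq_mul_left hn this
      have hmconst : m = fun _ => m ⟨0, hn⟩ := by
        funext p
        exact hcon m hm p ⟨0, hn⟩
      refine ⟨m ⟨0, hn⟩, ?_⟩
      have hset : {a : Fin n → ℕ | IsMinGen K n I a} = {m} := by
        ext b
        simp only [Set.mem_setOf_eq, Set.mem_singleton_iff]
        exact ⟨fun hb => hmc b hb, fun hb => hb ▸ hm⟩
      rw [span_minGens K n I ⟨S, hS⟩, hset, Set.image_singleton, ← hmconst]
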